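/- Let θ ∈ (0,π/2) and let K be a capillary convex body. Then the capillary outer radius and the classical outer radius of K satisfy (1 − cos θ)·ρ_+(K,θ) ≤ ρ_+(K) ≤ sin θ·ρ_+(K,θ). -/
import Mathlib


open MeasureTheory Real Set Filter
open scoped RealInnerProductSpace

noncomputable section

/-- Ambient Euclidean space `ℝ^{n+1}`. -/
abbrev Amb (n : ℕ) : Type := EuclideanSpace ℝ (Fin (n + 1))

/-- The `(n+1)`-st standard basis vector `E_{n+1}`. -/
def lastBasis (n : ℕ) : Amb n := EuclideanSpace.single (Fin.last n) 1

/-- The vector `e := -E_{n+1}`. -/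
def eVec (n : ℕ) : Amb n := -(lastBasis n)

/-- The closed upper half-space `\overline{ℝ^{n+1}_+}`. -/
def upperHalf (n : ℕ) : Set (Amb n) := {x | 0 ≤ x (Fin.last n)}

/-- The boundary hyperplane `∂ℝ^{n+1}_+`. -/
def hyperplane (n : ℕ) : Set (Amb n) := {x | x (Fin.last n) = 0}

/-- `ℓ(x) := sin²θ + cos θ · ⟨x, e⟩`. -/
def ell (n : ℕ) (θ : ℝ) (x : Amb n) : ℝ := sin θ ^ 2 + cos θ * ⟪x, eVec n⟫

/-- The unit spherical cap `C_θ`. -/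
def capSphere (n : ℕ) (θ : ℝ) : Set (Amb n) :=
  {ξ | ξ ∈ upperHalf n ∧ ‖ξ - cos θ • eVec n‖ = 1}

/-- The unit spherical cap body `Ĉ_θ`. -/
def capBodyUnit (n : ℕ) (θ : ℝ) : Set (Amb n) :=
  {x | x ∈ upperHalf n ∧ ‖x - cos θ • eVec n‖ ≤ 1}

/-- A capillary convex body: a compact convex subset of the closed upper half-space with
nonempty interior, whose flat part `K_f` has nonempty interior relative to the boundary
hyperplane and whose curved boundary `K_u` is nonempty. -/
structure IsCapillaryBody (n : ℕ) (K : Set (Amb n)) : Prop where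
  compact : IsCompact K
  convex : Convex ℝ K
  subset_upper : K ⊆ upperHalf n
  interior_nonempty : (interior K).Nonempty
  flat_relint_nonempty : (intrinsicInterior ℝ (K ∩ hyperplane n)).Nonempty
  curved_nonempty : (frontier K ∩ {x | 0 < x (Fin.last n)}).Nonempty

/-- Normal cone (of unit normal vectors) of `K` at `x`. -/
def normalCone (n : ℕ) (K : Set (Amb n)) (x : Amb n) : Set (Amb n) :=
  {ζ | ‖ζ‖ = 1 ∧ ∀ y ∈ K, ⟪ζ, y - x⟫ ≤ 0}

/-- A `θ`-capillary convex body: a capillary convex body with contact angle at most `θ`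
along the relative boundary of its flat part. -/
def IsThetaCapillary (n : ℕ) (θ : ℝ) (K : Set (Amb n)) : Prop :=
  IsCapillaryBody n K ∧
    ∀ x ∈ intrinsicFrontier ℝ (K ∩ hyperplane n),
      cos θ ≤ sSup ((fun ζ => ⟪ζ, lastBasis n⟫) '' normalCone n K x)

/-- Support function `h_z(ξ) := max_{y ∈ K} ⟨ξ - cos θ · e, y - z⟩`. -/
def suppFn (n : ℕ) (θ : ℝ) (K : Set (Amb n)) (z ξ : Amb n) : ℝ :=
  sSup ((fun y => ⟪ξ - cos θ • eVec n, y - z⟫) '' K)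

/-- Capillary support function `u_z := h_z / ℓ`. -/
def capSupp (n : ℕ) (θ : ℝ) (K : Set (Amb n)) (z ξ : Amb n) : ℝ :=
  suppFn n θ K z ξ / ell n θ ξ

/-- Capillary polar body `K*_z`. -/
def capPolar (n : ℕ) (θ : ℝ) (K : Set (Amb n)) (z : Amb n) : Set (Amb n) :=
  {x | ∃ r : ℝ, 0 ≤ r ∧ ∃ ξ ∈ capSphere n θ, x = z + r • ξ ∧ r * capSupp n θ K z ξ ≤ 1}

/-- Capillary area `ω_θ := ∫_{C_θ} ℓ dσ` of `C_θ` (surface measure = `n`-dimensional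
Hausdorff measure). -/
def omegaTheta (n : ℕ) (θ : ℝ) : ℝ := ∫ ξ in capSphere n θ, ell n θ ξ ∂μH[(n : ℝ)]

/-- `ℰ_θ(K, z) := (1/ω_θ) ∫_{C_θ} log(u_z) ℓ dσ`. -/
def entropyAt (n : ℕ) (θ : ℝ) (K : Set (Amb n)) (z : Amb n) : ℝ :=
  (1 / omegaTheta n θ) *
    ∫ ξ in capSphere n θ, Real.log (capSupp n θ K z ξ) * ell n θ ξ ∂μH[(n : ℝ)]

/-- Capillary entropy `ℰ_θ(K)`: supremum of `ℰ_θ(K, z)` over `z` in the relative interior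
of the flat part `K_f`. -/
def capEntropy (n : ℕ) (θ : ℝ) (K : Set (Amb n)) : ℝ :=
  sSup (entropyAt n θ K '' intrinsicInterior ℝ (K ∩ hyperplane n))

/-- The spherical cap body `Ĉ_{r,θ}(x₀)`. -/
def capBodyAt (n : ℕ) (θ r : ℝ) (x₀ : Amb n) : Set (Amb n) :=
  {x | x ∈ upperHalf n ∧ ‖x - (x₀ + (r * cos θ) • eVec n)‖ ≤ r}

/-- Capillary inner radius `ρ₋(K, θ)`. -/
def capInRadius (n : ℕ) (θ : ℝ) (K : Set (Amb n)) : ℝ :=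
  sSup {r : ℝ | 0 < r ∧ ∃ x₀ ∈ hyperplane n, capBodyAt n θ r x₀ ⊆ K}

/-- Capillary outer radius `ρ₊(K, θ)`. -/
def capOutRadius (n : ℕ) (θ : ℝ) (K : Set (Amb n)) : ℝ :=
  sInf {r : ℝ | 0 < r ∧ ∃ x₀ ∈ hyperplane n, K ⊆ capBodyAt n θ r x₀}

/-- Classical inner radius `ρ₋(K)`. -/
def inRadius (n : ℕ) (K : Set (Amb n)) : ℝ :=
  sSup {ρ : ℝ | 0 < ρ ∧ ∃ x₀ ∈ hyperplane n, Metric.ball x₀ ρ ∩ upperHalf n ⊆ K}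

/-- Classical outer radius `ρ₊(K)`. -/
def outRadius (n : ℕ) (K : Set (Amb n)) : ℝ :=
  sInf {ρ : ℝ | 0 < ρ ∧ ∃ x₀ ∈ hyperplane n, K ⊆ Metric.ball x₀ ρ}

/-- Dual capillary gauge function `F_θ^∘`. -/
def Fdual (n : ℕ) (θ : ℝ) (x : Amb n) : ℝ :=
  (1 / sin θ) *
    (Real.sqrt (‖x‖ ^ 2 + (cos θ / sin θ) ^ 2 * ⟪eVec n, x⟫ ^ 2) -
      (cos θ / sin θ) * ⟪eVec n, x⟫)

/-- Capillary gauge function `F_θ(η) := |η| + cos θ · ⟨e, η⟩`. -/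
def Fgauge (n : ℕ) (θ : ℝ) (η : Amb n) : ℝ := ‖η‖ + cos θ * ⟪eVec n, η⟫

/-- Capillary Cahn–Hoffman map `Ψ(ξ) := (ξ - cos θ · e)/ℓ(ξ)`. -/
def cahnHoffman (n : ℕ) (θ : ℝ) (ξ : Amb n) : Amb n :=
  (ell n θ ξ)⁻¹ • (ξ - cos θ • eVec n)

/-- The ellipsoid portion `D_θ`. -/
def Dtheta (n : ℕ) (θ : ℝ) : Set (Amb n) :=
  {η | Fgauge n θ η = 1 ∧ cos θ / sin θ ^ 2 ≤ ⟪η, lastBasis n⟫}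

/-- Reflection across the boundary hyperplane `∂ℝ^{n+1}_+`. -/
def reflect (n : ℕ) (x : Amb n) : Amb n :=
  x - (2 * ⟪x, lastBasis n⟫) • lastBasis n

lemma aux_ball_subset_capBody (n : ℕ) (θ ρ : ℝ) (hρ : 0 < ρ) (hcos : 0 ≤ cos θ)
    (hcos1 : cos θ < 1) (x₀ : Amb n) :
    Metric.ball x₀ ρ ∩ upperHalf n ⊆ capBodyAt n θ (ρ / (1 - cos θ)) x₀ := by
  rintro x ⟨hxb, hxu⟩
  set r : ℝ := ρ / (1 - cos θ) with hr
  have h1 : 0 < 1 - cos θ := by linarith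
  have hrρ : r * (1 - cos θ) = ρ := div_mul_cancel₀ ρ (ne_of_gt h1)
  have hr0 : 0 < r := div_pos hρ h1
  refine ⟨hxu, ?_⟩
  have hE : x - (x₀ + (r * cos θ) • eVec n) = (x - x₀) + (r * cos θ) • lastBasis n := by
    rw [eVec, smul_neg]; abel
  rw [hE]
  have h2 : ‖(x - x₀) + (r * cos θ) • lastBasis n‖ ≤ ‖x - x₀‖ + ‖(r * cos θ) • lastBasis n‖ :=
    norm_add_le _ _
  have h3 : ‖(r * cos θ) • lastBasis n‖ = r * cos θ := by
    rw [norm_smul, lastBasis, EuclideanSpace.norm_single, norm_one, mul_one,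
      Real.norm_eq_abs, abs_of_nonneg (mul_nonneg hr0.le hcos)]
  have h4 : ‖x - x₀‖ < ρ := by rw [← dist_eq_norm]; exact Metric.mem_ball.mp hxb
  nlinarith

lemma aux_capBody_subset_closedBall (n : ℕ) (θ r : ℝ) (hr : 0 < r) (hcos : 0 ≤ cos θ)
    (hsin : 0 ≤ sin θ) (x₀ : Amb n) (hx₀ : x₀ ∈ hyperplane n) :
    capBodyAt n θ r x₀ ⊆ Metric.closedBall x₀ (r * sin θ) := by
  rintro x ⟨hxu, hxn⟩
  set v : Amb n := x - (x₀ + (r * cos θ) • eVec n) with hv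
  have hxx₀ : x - x₀ = v - (r * cos θ) • lastBasis n := by
    rw [hv, eVec, smul_neg]; abel
  have hvlast : ⟪v, lastBasis n⟫ = x (Fin.last n) + r * cos θ := by
    rw [lastBasis, EuclideanSpace.inner_single_right]
    have hx₀' : x₀ (Fin.last n) = 0 := hx₀
    simp [hv, eVec, lastBasis, hx₀']
  have hnormE : ‖lastBasis n‖ = 1 := by
    rw [lastBasis, EuclideanSpace.norm_single]; simp
  have hexp : ‖x - x₀‖ ^ 2 =
      ‖v‖ ^ 2 - 2 * ((r * cos θ) * (x (Fin.last n) + r * cos θ)) + (r * cos θ) ^ 2 := by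
    rw [hxx₀, @norm_sub_sq_real, real_inner_smul_right, hvlast, norm_smul, hnormE]
    rw [Real.norm_eq_abs, mul_one, sq_abs]
  have hvle : ‖v‖ ≤ r := hxn
  have hxlast : 0 ≤ x (Fin.last n) := hxu
  have hpyth : sin θ ^ 2 + cos θ ^ 2 = 1 := Real.sin_sq_add_cos_sq θ
  have hvsq : ‖v‖ ^ 2 ≤ r ^ 2 := by nlinarith [norm_nonneg v]
  have hs2 : (r * sin θ) ^ 2 = r ^ 2 - (r * cos θ) ^ 2 := by
    have h : sin θ ^ 2 = 1 - cos θ ^ 2 := by linarith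
    rw [mul_pow, h, mul_pow]; ring
  have hsq : ‖x - x₀‖ ^ 2 ≤ (r * sin θ) ^ 2 := by
    rw [hs2]
    have hx3 : 0 ≤ r * cos θ * x (Fin.last n) := mul_nonneg (mul_nonneg hr.le hcos) hxlast
    linarith [hexp]
  rw [Metric.mem_closedBall, dist_eq_norm]
  exact (pow_le_pow_iff_left₀ (norm_nonneg _) (mul_nonneg hr.le hsin) two_ne_zero).mp hsq

/-- `(1 - cos θ) ρ₊(K, θ) ≤ ρ₊(K) ≤ sin θ · ρ₊(K, θ)` for `θ ∈ (0, π/2)`. -/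
theorem stmt_6 (n : ℕ) (hn : 1 ≤ n) (θ : ℝ) (hθ : θ ∈ Set.Ioo 0 (π / 2))
    (K : Set (Amb n)) (hK : IsCapillaryBody n K) :
    (1 - cos θ) * capOutRadius n θ K ≤ outRadius n K ∧
    outRadius n K ≤ sin θ * capOutRadius n θ K := by
  obtain ⟨hθ0, hθ2⟩ := hθ
  have hπ : θ < π := by nlinarith [Real.pi_pos]
  have hsin : 0 < sin θ := Real.sin_pos_of_pos_of_lt_pi hθ0 hπ
  have hcos : 0 < cos θ := Real.cos_pos_of_mem_Ioo ⟨by linarith [Real.pi_pos], hθ2⟩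
  have hpyth : sin θ ^ 2 + cos θ ^ 2 = 1 := Real.sin_sq_add_cos_sq θ
  have hcos1 : cos θ < 1 := by nlinarith
  have h1c : 0 < 1 - cos θ := by linarith
  set Scap : Set ℝ := {r : ℝ | 0 < r ∧ ∃ x₀ ∈ hyperplane n, K ⊆ capBodyAt n θ r x₀} with hScap
  set Sout : Set ℝ := {ρ : ℝ | 0 < ρ ∧ ∃ x₀ ∈ hyperplane n, K ⊆ Metric.ball x₀ ρ} with hSout
  have hcap_eq : capOutRadius n θ K = sInf Scap := rfl
  have hout_eq : outRadius n K = sInf Sout := rfl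
  have hbddc : BddBelow Scap := ⟨0, fun r hr => hr.1.le⟩
  have hbddo : BddBelow Sout := ⟨0, fun r hr => hr.1.le⟩
  have h0hyp : (0 : Amb n) ∈ hyperplane n := by simp [hyperplane]
  -- Sout is nonempty
  obtain ⟨R, hR0, hRsub⟩ := hK.compact.isBounded.subset_ball_lt 0 0
  have hne_out : Sout.Nonempty := ⟨R, hR0, 0, h0hyp, hRsub⟩
  -- each ρ ∈ Sout gives ρ/(1-cosθ) ∈ Scap
  have hstep1 : ∀ ρ ∈ Sout, ρ / (1 - cos θ) ∈ Scap := by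
    rintro ρ ⟨hρ0, x₀, hx₀, hsub⟩
    refine ⟨div_pos hρ0 h1c, x₀, hx₀, ?_⟩
    intro x hx
    exact aux_ball_subset_capBody n θ ρ hρ0 hcos.le hcos1 x₀ ⟨hsub hx, hK.subset_upper hx⟩
  have hne_cap : Scap.Nonempty := ⟨R / (1 - cos θ), hstep1 R ⟨hR0, 0, h0hyp, hRsub⟩⟩
  constructor
  · -- (1 - cos θ) * capOut ≤ outRadius
    rw [hout_eq]
    refine le_csInf hne_out ?_
    intro ρ hρ
    have h1 : capOutRadius n θ K ≤ ρ / (1 - cos θ) := csInf_le hbddc (hstep1 ρ hρ)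
    rw [mul_comm]
    calc capOutRadius n θ K * (1 - cos θ) ≤ ρ / (1 - cos θ) * (1 - cos θ) := by
          exact mul_le_mul_of_nonneg_right h1 h1c.le
      _ = ρ := by field_simp
  · -- outRadius ≤ sin θ * capOut
    have hstep2 : ∀ r ∈ Scap, outRadius n K ≤ sin θ * r := by
      rintro r ⟨hr0, x₀, hx₀, hsub⟩
      have hsub' : K ⊆ Metric.closedBall x₀ (r * sin θ) :=
        fun x hx => aux_capBody_subset_closedBall n θ r hr0 hcos.le hsin.le x₀ hx₀ (hsub hx)
      have : ∀ ε > 0, outRadius n K ≤ sin θ * r + ε := by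
        intro ε hε
        rw [hout_eq]
        refine csInf_le hbddo ⟨by positivity, x₀, hx₀, ?_⟩
        intro x hx
        have := hsub' hx
        rw [Metric.mem_closedBall] at this
        rw [Metric.mem_ball]
        calc dist x x₀ ≤ r * sin θ := this
          _ < sin θ * r + ε := by linarith [mul_comm r (sin θ)]
      exact le_of_forall_pos_le_add this
    have : outRadius n K / sin θ ≤ sInf Scap := by
      refine le_csInf hne_cap ?_
      intro r hr
      rw [div_le_iff₀ hsin]
      calc outRadius n K ≤ sin θ * r := hstep2 r hr
        _ = r * sin θ := mul_comm _ _
    rw [hcap_eq]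
    calc outRadius n K = outRadius n K / sin θ * sin θ := by field_simp
      _ ≤ sInf Scap * sin θ := mul_le_mul_of_nonneg_right this hsin.le
      _ = sin θ * sInf Scap := mul_comm _ _

end
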